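/- Let 0 ≤ δ₂ ≤ δ₁ ≤ 1/2 and t ∈ [0,1/2]. Then h_b(δ₁) - h_b(δ₂) ≥ h_b(δ₁ * t) - h_b(δ₂ * t) ≥ 0, where a * t = a(1-t)+(1-a)t. Moreover, if δ₂ < δ₁ and 0 < t ≤ 1/2 then the first inequality is strict. -/

import Mathlib

/-- Binary entropy (base 2). -/
noncomputable def hb (p : ℝ) : ℝ := -(p * Real.logb 2 p) - (1 - p) * Real.logb 2 (1 - p)

/-- Binary convolution: `a * t := a(1-t) + (1-a)t`. -/
noncomputable def binConv (a t : ℝ) : ℝ := a * (1 - t) + (1 - a) * t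

open Real

lemma hb_eq (p : ℝ) : hb p = binEntropy p / log 2 := by
  simp [hb, Real.binEntropy, Real.logb, Real.log_inv]
  ring

lemma key (t : ℝ) (ht0 : 0 < t) (ht2 : t ≤ 1/2) :
    StrictMonoOn (fun a => binEntropy a - binEntropy (binConv a t)) (Set.Icc 0 (1/2 : ℝ)) := by
  apply strictMonoOn_of_deriv_pos (convex_Icc _ _)
  · exact (binEntropy_continuous.sub (binEntropy_continuous.comp
      (by unfold binConv; fun_prop))).continuousOn
  · intro x hx
    rw [interior_Icc] at hx
    obtain ⟨hx0, hx1⟩ := hx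
    set b := binConv x t with hb
    have hb0 : 0 < b := by simp only [hb, binConv]; nlinarith
    have hb2 : b ≤ 1/2 := by simp only [hb, binConv]; nlinarith
    have hb1 : b < 1 := by linarith
    have h1 : HasDerivAt (fun a => binConv a t) (1 - 2*t) x := by
      have h := ((hasDerivAt_id x).mul_const (1-t)).add
          (((hasDerivAt_id x).const_sub 1).mul_const t)
      simpa [binConv, id, Pi.add_def] using h.congr_deriv (by ring)
    have h2 : HasDerivAt binEntropy (log (1 - b) - log b) b :=
      hasDerivAt_binEntropy hb0.ne' hb1.ne
    have h3 : HasDerivAt (fun a => binEntropy (binConv a t))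
        ((log (1 - b) - log b) * (1 - 2*t)) x := by have := h2.comp x h1; exact this
    have h4 : HasDerivAt binEntropy (log (1 - x) - log x) x :=
      hasDerivAt_binEntropy hx0.ne' (by linarith)
    have h5 : HasDerivAt (fun a => binEntropy a - binEntropy (binConv a t))
        ((log (1 - x) - log x) - (log (1 - b) - log b) * (1 - 2*t)) x := h4.sub h3
    rw [h5.deriv]
    have hDx : 0 < log (1 - x) - log x := by
      have := Real.log_lt_log hx0 (show x < 1 - x by linarith)
      linarith
    have hDb : 0 ≤ log (1 - b) - log b := by
      have := Real.log_le_log hb0 (show b ≤ 1 - b by linarith)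
      linarith
    rcases eq_or_lt_of_le ht2 with h | h
    · have he : 1 - 2*t = 0 := by rw [h]; norm_num
      rw [he]; linarith
    · have hbx : x < b := by simp only [hb, binConv]; nlinarith
      have hDbx : log (1 - b) - log b < log (1 - x) - log x := by
        have l1 : log (1 - b) < log (1 - x) := Real.log_lt_log (by linarith) (by linarith)
        have l2 : log x < log b := Real.log_lt_log hx0 hbx
        linarith
      nlinarith [mul_le_of_le_one_right hDb (show 1 - 2*t ≤ 1 by linarith)]

/-- For `0 ≤ δ₂ ≤ δ₁ ≤ 1/2` and `t ∈ [0,1/2]`: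
`h_b(δ₁) - h_b(δ₂) ≥ h_b(δ₁*t) - h_b(δ₂*t) ≥ 0`, with the first inequality
strict when `δ₂ < δ₁` and `0 < t`. -/
theorem entropy_gap_shrinks (δ₁ δ₂ t : ℝ) (h0 : 0 ≤ δ₂) (h21 : δ₂ ≤ δ₁)
    (h1 : δ₁ ≤ 1/2) (ht : t ∈ Set.Icc (0:ℝ) (1/2)) :
    (hb (binConv δ₁ t) - hb (binConv δ₂ t) ≤ hb δ₁ - hb δ₂) ∧
    (0 ≤ hb (binConv δ₁ t) - hb (binConv δ₂ t)) ∧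
    (δ₂ < δ₁ → 0 < t → hb (binConv δ₁ t) - hb (binConv δ₂ t) < hb δ₁ - hb δ₂) := by
  obtain ⟨ht0, ht2⟩ := ht
  have hlog2 : (0:ℝ) < log 2 := Real.log_pos (by norm_num)
  have hs20 : 0 ≤ binConv δ₂ t := by simp only [binConv]; nlinarith
  have hs21 : binConv δ₂ t ≤ binConv δ₁ t := by simp only [binConv]; nlinarith
  have hs12 : binConv δ₁ t ≤ 1/2 := by simp only [binConv]; nlinarith
  have strict : δ₂ < δ₁ → 0 < t → hb (binConv δ₁ t) - hb (binConv δ₂ t) < hb δ₁ - hb δ₂ := by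
    intro hlt htpos
    have := key t htpos ht2 ⟨h0, by linarith⟩ ⟨by linarith, h1⟩ hlt
    simp only [hb_eq]
    rw [div_sub_div_same, div_sub_div_same, div_lt_div_iff_of_pos_right hlog2]
    dsimp at this
    linarith
  refine ⟨?_, ?_, strict⟩
  · rcases eq_or_lt_of_le h21 with h | h
    · rw [h]; simp
    · rcases eq_or_lt_of_le ht0 with h' | h'
      · simp [binConv, ← h']
      · exact (strict h h').le
  · have : binEntropy (binConv δ₂ t) ≤ binEntropy (binConv δ₁ t) :=
      binEntropy_strictMonoOn.monotoneOn ⟨hs20, by norm_num; linarith⟩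
        ⟨by linarith, by norm_num; linarith⟩ hs21
    simp only [hb_eq]
    rw [div_sub_div_same]
    exact div_nonneg (by linarith) hlog2.le
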